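/- Let R be a random variable on [0,1] with strictly increasing continuous CDF F and density p. The minimizer of Q(b) = ∫_a^b (b-r)(r-a) dF(r) + ∫_b^c (c-r)(r-b) dF(r) over b ∈ [a,c] is b* = F^{-1}( F(c) - ∫_a^c ((r-a)/(c-a)) dF(r) ). -/

import Mathlib

/-- Let R be a random variable on [0,1] with strictly increasing
continuous CDF F and (continuous, positive) density p.  The minimizer of
Q(b) = ∫_a^b (b-r)(r-a) dF(r) + ∫_b^c (c-r)(r-b) dF(r) over b ∈ [a,c] is
b* = F⁻¹( F(c) - ∫_a^c ((r-a)/(c-a)) dF(r) ),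
i.e. the point b* ∈ [a,c] satisfying F(b*) = F(c) - ∫_a^c ((r-a)/(c-a)) p(r) dr. -/
theorem stmt1 (F p : ℝ → ℝ) (a c : ℝ) (ha : 0 ≤ a) (hac : a < c) (hc : c ≤ 1)
    (hF : ∀ x, HasDerivAt F (p x) x) (hpcont : Continuous p)
    (hppos : ∀ x ∈ Set.Icc (0:ℝ) 1, 0 < p x)
    (hmono : StrictMonoOn F (Set.Icc (0:ℝ) 1))
    (Q : ℝ → ℝ)
    (hQ : ∀ b, Q b = (∫ r in a..b, (b - r) * (r - a) * p r) +
      ∫ r in b..c, (c - r) * (r - b) * p r)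
    (bstar : ℝ) (hbmem : bstar ∈ Set.Icc a c)
    (hbs : F bstar = F c - ∫ r in a..c, ((r - a) / (c - a)) * p r) :
    IsMinOn Q (Set.Icc a c) bstar := by
  have hca : c - a ≠ 0 := sub_ne_zero.mpr hac.ne'
  -- the fixed integrands
  set f1 : ℝ → ℝ := fun r => (r - a) * p r with hf1def
  set f2 : ℝ → ℝ := fun r => (c - r) * p r with hf2def
  set g1 : ℝ → ℝ := fun r => r * ((r - a) * p r) with hg1def
  set g2 : ℝ → ℝ := fun r => r * ((c - r) * p r) with hg2def
  have cf1 : Continuous f1 := by fun_prop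
  have cf2 : Continuous f2 := by fun_prop
  have cg1 : Continuous g1 := by fun_prop
  have cg2 : Continuous g2 := by fun_prop
  set A : ℝ → ℝ := fun b => ∫ r in a..b, f1 r with hAdef
  set E : ℝ → ℝ := fun b => ∫ r in b..c, f2 r with hEdef
  -- rewrite Q
  have hQeq : Q = fun b => b * A b - (∫ r in a..b, g1 r)
      + ((∫ r in b..c, g2 r) - b * E b) := by
    funext b
    rw [hQ]
    have h1 : (∫ r in a..b, (b - r) * (r - a) * p r)
        = b * A b - ∫ r in a..b, g1 r := by
      simp only [hAdef]
      rw [← intervalIntegral.integral_const_mul,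
        ← intervalIntegral.integral_sub
          ((show Continuous (fun r => b * f1 r) from continuous_const.mul cf1).intervalIntegrable a b)
          (cg1.intervalIntegrable a b)]
      apply intervalIntegral.integral_congr
      intro r _
      simp only [hf1def, hg1def]; ring
    have h2 : (∫ r in b..c, (c - r) * (r - b) * p r)
        = (∫ r in b..c, g2 r) - b * E b := by
      simp only [hEdef]
      rw [← intervalIntegral.integral_const_mul,
        ← intervalIntegral.integral_sub
          (cg2.intervalIntegrable b c)
          ((show Continuous (fun r => b * f2 r) from continuous_const.mul cf2).intervalIntegrable b c)]
      apply intervalIntegral.integral_congr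
      intro r _
      simp only [hf2def, hg2def]; ring
    rw [h1, h2]
  -- derivative of Q
  have hderiv : ∀ b, HasDerivAt Q (A b - E b) b := by
    intro b
    have hA : HasDerivAt A (f1 b) b :=
      intervalIntegral.integral_hasDerivAt_right (cf1.intervalIntegrable a b)
        (cf1.stronglyMeasurableAtFilter _ _) cf1.continuousAt
    have hG1 : HasDerivAt (fun u => ∫ r in a..u, g1 r) (g1 b) b :=
      intervalIntegral.integral_hasDerivAt_right (cg1.intervalIntegrable a b)
        (cg1.stronglyMeasurableAtFilter _ _) cg1.continuousAt
    have hG2 : HasDerivAt (fun u => ∫ r in u..c, g2 r) (-g2 b) b :=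
      intervalIntegral.integral_hasDerivAt_left (cg2.intervalIntegrable b c)
        (cg2.stronglyMeasurableAtFilter _ _) cg2.continuousAt
    have hE : HasDerivAt E (-f2 b) b :=
      intervalIntegral.integral_hasDerivAt_left (cf2.intervalIntegrable b c)
        (cf2.stronglyMeasurableAtFilter _ _) cf2.continuousAt
    rw [hQeq]
    have := (((hasDerivAt_id b).mul hA).sub hG1).add
      (hG2.sub ((hasDerivAt_id b).mul hE))
    refine this.congr_deriv ?_
    simp only [hf1def, hf2def, hg1def, hg2def, id_eq]
    ring
  -- FTC for F
  have hFTC : ∀ x y : ℝ, (∫ r in x..y, p r) = F y - F x := fun x y =>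
    intervalIntegral.integral_eq_sub_of_hasDerivAt (fun r _ => hF r)
      (hpcont.intervalIntegrable x y)
  -- key identity at bstar : A bstar = E bstar
  have hkey : A bstar = E bstar := by
    have h1 : (∫ r in a..c, ((r - a) / (c - a)) * p r) = F c - F bstar := by
      rw [hbs]; ring
    have h2 : (∫ r in a..c, f1 r) = (c - a) * ∫ r in bstar..c, p r := by
      rw [hFTC, ← h1, ← intervalIntegral.integral_const_mul]
      apply intervalIntegral.integral_congr
      intro r _
      simp only [hf1def]
      field_simp
    have h3 : A bstar = (∫ r in a..c, f1 r) - ∫ r in bstar..c, f1 r := by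
      simp only [hAdef]
      rw [eq_sub_iff_add_eq]
      exact intervalIntegral.integral_add_adjacent_intervals
        (cf1.intervalIntegrable _ _) (cf1.intervalIntegrable _ _)
    have h4 : E bstar = (c - a) * (∫ r in bstar..c, p r) - ∫ r in bstar..c, f1 r := by
      simp only [hEdef]
      rw [← intervalIntegral.integral_const_mul,
        ← intervalIntegral.integral_sub
          ((show Continuous (fun r => (c - a) * p r) from continuous_const.mul hpcont).intervalIntegrable _ _)
          (cf1.intervalIntegrable _ _)]
      apply intervalIntegral.integral_congr
      intro r _
      simp only [hf1def, hf2def]; ring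
    rw [h3, h4, h2]
  -- A x - E x = ∫_{bstar}^x (c-a) p
  have hHrep : ∀ x, A x - E x = ∫ r in bstar..x, (c - a) * p r := by
    intro x
    have hAx : A x = A bstar + ∫ r in bstar..x, f1 r := by
      simp only [hAdef]
      exact (intervalIntegral.integral_add_adjacent_intervals
        (cf1.intervalIntegrable a bstar) (cf1.intervalIntegrable bstar x)).symm
    have hEx : E x = E bstar - ∫ r in bstar..x, f2 r := by
      simp only [hEdef]
      rw [eq_sub_iff_add_eq, add_comm]
      exact intervalIntegral.integral_add_adjacent_intervals
        (cf2.intervalIntegrable bstar x) (cf2.intervalIntegrable x c)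
    have hsum : (∫ r in bstar..x, f1 r) + (∫ r in bstar..x, f2 r)
        = ∫ r in bstar..x, (c - a) * p r := by
      rw [← intervalIntegral.integral_add (cf1.intervalIntegrable _ _)
        (cf2.intervalIntegrable _ _)]
      apply intervalIntegral.integral_congr
      intro r _
      simp only [hf1def, hf2def]; ring
    rw [hAx, hEx, hkey]
    linarith [hsum]
  have hQcont : Continuous Q := by
    rw [continuous_iff_continuousAt]; exact fun x => (hderiv x).continuousAt
  have hQdiff : ∀ s : Set ℝ, DifferentiableOn ℝ Q s :=
    fun s x _ => (hderiv x).differentiableAt.differentiableWithinAt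
  -- nonnegativity of p on subintervals of [a,c]
  have hpn : ∀ x ∈ Set.Icc a c, 0 ≤ p x := fun x hx =>
    (hppos x ⟨le_trans ha hx.1, le_trans hx.2 hc⟩).le
  -- antitone on [a, bstar]
  have hanti : AntitoneOn Q (Set.Icc a bstar) := by
    apply antitoneOn_of_deriv_nonpos (convex_Icc _ _) hQcont.continuousOn (hQdiff _)
    intro x hx
    rw [interior_Icc] at hx
    rw [(hderiv x).deriv, hHrep x, intervalIntegral.integral_symm, neg_nonpos]
    apply intervalIntegral.integral_nonneg hx.2.le
    intro u hu
    exact mul_nonneg (sub_nonneg.mpr hac.le)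
      (hpn u ⟨le_trans hx.1.le hu.1, le_trans hu.2 hbmem.2⟩)
  -- monotone on [bstar, c]
  have hmon : MonotoneOn Q (Set.Icc bstar c) := by
    apply monotoneOn_of_deriv_nonneg (convex_Icc _ _) hQcont.continuousOn (hQdiff _)
    intro x hx
    rw [interior_Icc] at hx
    rw [(hderiv x).deriv, hHrep x]
    apply intervalIntegral.integral_nonneg hx.1.le
    intro u hu
    exact mul_nonneg (sub_nonneg.mpr hac.le)
      (hpn u ⟨le_trans hbmem.1 hu.1, le_trans hu.2 hx.2.le⟩)
  -- conclude
  rw [isMinOn_iff]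
  intro x hx
  rcases le_total x bstar with h | h
  · exact hanti ⟨hx.1, h⟩ ⟨hbmem.1, le_refl _⟩ h
  · exact hmon ⟨le_refl _, hbmem.2⟩ ⟨h, hx.2⟩ h
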